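/- Let F be an odd-sunflower-free family of nonempty subsets of {1,…,n} and let G be an odd-sunflower-free antichain of nonempty subsets of {1,…,m}. Then the wreath product F ≀ G is odd-sunflower-free. Moreover, if F is also an antichain, then F ≀ G is an antichain. -/

import Mathlib

variable {α : Type*}

/-- A family of at least two nonempty finite sets is an *odd-sunflower* if every element of
the union of its members is contained in an odd number of its members. -/
def IsOddSunflower [DecidableEq α] (F : Finset (Finset α)) : Prop :=
  2 ≤ F.card ∧ (∀ S ∈ F, S.Nonempty) ∧
    ∀ x ∈ F.sup id, Odd (F.filter (fun S => x ∈ S)).card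

/-- A family is *odd-sunflower-free* if no subfamily of it (necessarily with at least two
members) is an odd-sunflower. -/
def OddSunflowerFree [DecidableEq α] (F : Finset (Finset α)) : Prop :=
  ∀ H ⊆ F, ¬ IsOddSunflower H

/-- A nonempty family of nonempty finite sets is an *even-sunflower* if every element of
the union of its members is contained in an even number of its members. -/
def IsEvenSunflower [DecidableEq α] (F : Finset (Finset α)) : Prop :=
  F.Nonempty ∧ (∀ S ∈ F, S.Nonempty) ∧
    ∀ x ∈ F.sup id, Even (F.filter (fun S => x ∈ S)).card

/-- A family is *even-sunflower-free* if no nonempty subfamily of it is an even-sunflower. -/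
def EvenSunflowerFree [DecidableEq α] (F : Finset (Finset α)) : Prop :=
  ∀ H ⊆ F, ¬ IsEvenSunflower H

/-- A family of at least three sets is a *sunflower* if every element is contained either
in all of the sets or in at most one of them. -/
def IsSunflower [DecidableEq α] (H : Finset (Finset α)) : Prop :=
  3 ≤ H.card ∧ ∀ x : α, (∀ S ∈ H, x ∈ S) ∨ (H.filter (fun S => x ∈ S)).card ≤ 1

/-- A family of sets is an *antichain* if none of its members is a proper subset of another. -/
def IsAntichainFamily (F : Finset (Finset α)) : Prop :=
  ∀ S ∈ F, ∀ T ∈ F, S ⊆ T → S = T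

/-- An odd-sunflower is *minimal* if no proper subfamily of it is an odd-sunflower. -/
def IsMinimalOddSunflower [DecidableEq α] (F : Finset (Finset α)) : Prop :=
  IsOddSunflower F ∧ ∀ H ⊂ F, ¬ IsOddSunflower H

/-- `Cfam n` is the family of all `(n-1)`-element subsets of `{1, …, n}`. -/
def Cfam (n : ℕ) : Finset (Finset ℕ) := (Finset.Icc 1 n).powersetCard (n - 1)

/-- `CfamPlus n` is `Cfam n` together with the full set `{1, …, n}`. -/
def CfamPlus (n : ℕ) : Finset (Finset ℕ) := insert (Finset.Icc 1 n) (Cfam n)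

/-- A multifamily (multiset) of at least two nonempty finite sets is an *odd-sunflower* if
every element of the union of its members has odd degree (counted with multiplicity). -/
def MultiOddSunflower [DecidableEq α] (H : Multiset (Finset α)) : Prop :=
  2 ≤ Multiset.card H ∧ (∀ S ∈ H, S.Nonempty) ∧
    ∀ x ∈ H.sup, Odd (H.countP (fun S => x ∈ S))

/-- The wreath product of two families. -/
def Wreath {β : Type*} [DecidableEq α] [DecidableEq β]
    (F : Set (Finset α)) (G : Set (Finset β)) : Set (Finset (α × β)) :=
  {S | ∃ F₀ ∈ F, ∃ g : α → Finset β, (∀ i ∈ F₀, g i ∈ G) ∧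
    S = F₀.biUnion (fun i => ({i} : Finset α) ×ˢ g i)}

/-- Odd-sunflower-freeness for set-indexed families. -/
def OddSunflowerFreeS [DecidableEq α] (F : Set (Finset α)) : Prop :=
  ∀ H : Finset (Finset α), ↑H ⊆ F → ¬ IsOddSunflower H

/-- Antichain condition for set-indexed families. -/
def IsAntichainFamilyS (F : Set (Finset α)) : Prop :=
  ∀ S ∈ F, ∀ T ∈ F, S ⊆ T → S = T

def projF (S : Finset (ℕ × ℕ)) : Finset ℕ := S.image Prod.fst
def fibF (i : ℕ) (S : Finset (ℕ × ℕ)) : Finset ℕ :=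
  (S.filter (fun p => p.1 = i)).image Prod.snd

lemma mem_fibF {i j : ℕ} {S : Finset (ℕ × ℕ)} : j ∈ fibF i S ↔ (i, j) ∈ S := by
  simp only [fibF, Finset.mem_image, Finset.mem_filter]
  constructor
  · rintro ⟨⟨a, b⟩, ⟨hmem, ha⟩, hb⟩
    simp only at ha hb
    subst ha; subst hb; exact hmem
  · intro h; exact ⟨(i, j), ⟨h, rfl⟩, rfl⟩

lemma mem_projF {i : ℕ} {S : Finset (ℕ × ℕ)} : i ∈ projF S ↔ ∃ j, (i, j) ∈ S := by
  simp only [projF, Finset.mem_image]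
  constructor
  · rintro ⟨⟨a, b⟩, h, rfl⟩; exact ⟨b, h⟩
  · rintro ⟨j, h⟩; exact ⟨(i, j), h, rfl⟩

lemma pair_mem {i j : ℕ} {S : Finset (ℕ × ℕ)} :
    (i, j) ∈ S ↔ i ∈ projF S ∧ j ∈ fibF i S := by
  constructor
  · intro h; exact ⟨mem_projF.2 ⟨j, h⟩, mem_fibF.2 h⟩
  · rintro ⟨_, h⟩; exact mem_fibF.1 h

lemma cast_zmod2 (k : ℕ) : (k : ZMod 2) = if Odd k then 1 else 0 := by
  rcases Nat.even_or_odd k with h | h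
  · simp only [Nat.not_odd_iff_even.2 h, if_false]
    rw [← ZMod.natCast_mod, Nat.even_iff.1 h]
    simp
  · simp only [h, if_true]
    rw [← ZMod.natCast_mod, Nat.odd_iff.1 h]
    simp

lemma odd_iff_zmod2 (k : ℕ) : Odd k ↔ (k : ZMod 2) = 1 := by
  rw [cast_zmod2]
  by_cases h : Odd k <;> simp [h]

lemma parity_fiber {β : Type*} [DecidableEq β] (s : Finset β) (f : β → Finset ℕ) (j : ℕ) :
    (((s.filter (fun x => j ∈ f x)).card : ZMod 2)) =
      (((((s.image f).filter (fun T => Odd ((s.filter (fun x => f x = T)).card))).filter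
        (fun T => j ∈ T)).card : ZMod 2)) := by
  have key : (s.filter (fun x => j ∈ f x)).card =
      ∑ T ∈ (s.image f).filter (fun T => j ∈ T), (s.filter (fun x => f x = T)).card := by
    rw [Finset.card_eq_sum_card_fiberwise (f := f)
      (t := (s.image f).filter (fun T => j ∈ T))
      (fun x hx => by
        simp only [Finset.coe_filter, Finset.mem_coe, Finset.mem_filter, Set.mem_setOf_eq] at hx ⊢
        exact ⟨Finset.mem_image_of_mem f hx.1, hx.2⟩)]
    apply Finset.sum_congr rfl
    intro T hT
    simp only [Finset.mem_filter] at hT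
    congr 1
    ext x
    simp only [Finset.mem_filter]
    constructor
    · rintro ⟨⟨hx, _⟩, hfx⟩; exact ⟨hx, hfx⟩
    · rintro ⟨hx, hfx⟩; exact ⟨⟨hx, hfx ▸ hT.2⟩, hfx⟩
  rw [key]
  push_cast
  rw [Finset.sum_congr rfl (fun T _ => cast_zmod2 _)]
  rw [Finset.sum_boole, Finset.filter_comm]

lemma collapse {β : Type*} [DecidableEq β] {G : Finset (Finset ℕ)}
    (hGne : ∀ T ∈ G, T.Nonempty) (hGfree : OddSunflowerFree G)
    (hGac : IsAntichainFamily G) (s : Finset β) (f : β → Finset ℕ)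
    (hf : ∀ x ∈ s, f x ∈ G)
    (hodd : ∀ j : ℕ, (∃ x ∈ s, j ∈ f x) → Odd ((s.filter (fun x => j ∈ f x)).card)) :
    ∀ x ∈ s, ∀ y ∈ s, f x = f y := by
  set K := (s.image f).filter (fun T => Odd ((s.filter (fun x => f x = T)).card)) with hK
  have hKG : K ⊆ G := by
    intro T hT
    simp only [hK, Finset.mem_filter, Finset.mem_image] at hT
    obtain ⟨⟨x, hx, rfl⟩, _⟩ := hT
    exact hf x hx
  have hKodd : ∀ j : ℕ, (∃ x ∈ s, j ∈ f x) → Odd ((K.filter (fun T => j ∈ T)).card) := by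
    intro j hj
    have h1 := (odd_iff_zmod2 _).1 (hodd j hj)
    have h2 := parity_fiber s f j
    exact (odd_iff_zmod2 _).2 (h2 ▸ h1)
  have hKle : K.card ≤ 1 := by
    by_contra hc
    apply hGfree K hKG
    refine ⟨by omega, fun T hT => hGne T (hKG hT), fun j hj => ?_⟩
    rw [Finset.mem_sup] at hj
    obtain ⟨T, hT, hjT⟩ := hj
    have hT' := hT
    simp only [hK, Finset.mem_filter, Finset.mem_image] at hT'
    obtain ⟨⟨x, hx, rfl⟩, _⟩ := hT'
    exact hKodd j ⟨x, hx, hjT⟩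
  have hsub : ∀ z ∈ s, ∀ T ∈ K, f z = T := by
    intro z hz T hT
    refine hGac _ (hf z hz) T (hKG hT) ?_
    intro j hjz
    have h := hKodd j ⟨z, hz, hjz⟩
    have hpos : (K.filter (fun T => j ∈ T)).Nonempty := by
      rw [← Finset.card_pos]
      rcases h with ⟨c, hc⟩; omega
    obtain ⟨T', hT'⟩ := hpos
    simp only [Finset.mem_filter] at hT'
    have : T' = T := Finset.card_le_one.1 hKle _ hT'.1 _ hT
    exact this ▸ hT'.2
  intro x hx y hy
  have hKne : K.Nonempty := by
    obtain ⟨j, hj⟩ := hGne _ (hf x hx)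
    have h := hKodd j ⟨x, hx, hj⟩
    rw [← Finset.card_pos]
    have : (K.filter (fun T => j ∈ T)).card ≤ K.card := Finset.card_le_card (Finset.filter_subset _ _)
    rcases h with ⟨c, hc⟩; omega
  obtain ⟨T₀, hT₀⟩ := hKne
  rw [hsub x hx T₀ hT₀, hsub y hy T₀ hT₀]

lemma wreath_struct {F G : Finset (Finset ℕ)} (hGne : ∀ T ∈ G, T.Nonempty)
    {S : Finset (ℕ × ℕ)} (hS : S ∈ Wreath (F : Set (Finset ℕ)) (G : Set (Finset ℕ))) :
    projF S ∈ F ∧ ∀ i ∈ projF S, fibF i S ∈ G := by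
  obtain ⟨A, hA, g, hg, rfl⟩ := hS
  have hmem : ∀ i j : ℕ,
      ((i, j) ∈ A.biUnion (fun i => ({i} : Finset ℕ) ×ˢ g i)) ↔ i ∈ A ∧ j ∈ g i := by
    intro i j
    simp only [Finset.mem_biUnion, Finset.mem_product, Finset.mem_singleton]
    constructor
    · rintro ⟨a, ha, rfl, hj⟩; exact ⟨ha, hj⟩
    · rintro ⟨hi, hj⟩; exact ⟨i, hi, rfl, hj⟩
  have hproj : projF (A.biUnion fun i => ({i} : Finset ℕ) ×ˢ g i) = A := by
    ext i
    rw [mem_projF]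
    constructor
    · rintro ⟨j, h⟩; exact ((hmem i j).1 h).1
    · intro hi
      obtain ⟨j, hj⟩ := hGne _ (hg i hi)
      exact ⟨j, (hmem i j).2 ⟨hi, hj⟩⟩
  refine ⟨by rw [hproj]; exact hA, fun i hi => ?_⟩
  rw [hproj] at hi
  have hfib : fibF i (A.biUnion fun i => ({i} : Finset ℕ) ×ˢ g i) = g i := by
    ext j
    rw [mem_fibF, hmem]
    exact ⟨fun h => h.2, fun h => ⟨hi, h⟩⟩
  rw [hfib]
  exact hg i hi

/-- Lemma 6: if `F` is an odd-sunflower-free family of nonempty subsets of `{1,…,n}` and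
`G` is an odd-sunflower-free antichain of nonempty subsets of `{1,…,m}`, then the wreath
product `F ≀ G` is odd-sunflower-free; moreover, if `F` is also an antichain then so is
`F ≀ G`. -/
theorem wreath_oddSunflowerFree (n m : ℕ) (F G : Finset (Finset ℕ))
    (hF : ∀ S ∈ F, S.Nonempty ∧ S ⊆ Finset.Icc 1 n)
    (hG : ∀ S ∈ G, S.Nonempty ∧ S ⊆ Finset.Icc 1 m)
    (hFfree : OddSunflowerFree F) (hGfree : OddSunflowerFree G)
    (hGac : IsAntichainFamily G) :
    OddSunflowerFreeS (Wreath (F : Set (Finset ℕ)) (G : Set (Finset ℕ))) ∧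
    (IsAntichainFamily F → IsAntichainFamilyS (Wreath (F : Set (Finset ℕ)) (G : Set (Finset ℕ)))) := by
  have hGne : ∀ T ∈ G, T.Nonempty := fun T hT => (hG T hT).1
  constructor
  · intro H hH hos
    obtain ⟨hcard, hne, hodd⟩ := hos
    have hstruct : ∀ S ∈ H, projF S ∈ F ∧ ∀ i ∈ projF S, fibF i S ∈ G :=
      fun S hS => wreath_struct hGne (hH hS)
    -- all fibers at a given coordinate coincide
    have hfib : ∀ i : ℕ, ∀ S ∈ H, ∀ S' ∈ H, i ∈ projF S → i ∈ projF S' →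
        fibF i S = fibF i S' := by
      intro i
      have hcol := collapse hGne hGfree hGac (H.filter (fun S => i ∈ projF S)) (fibF i)
        (fun S hS => by
          simp only [Finset.mem_filter] at hS
          exact (hstruct S hS.1).2 i hS.2)
        (fun j hj => by
          obtain ⟨S₀, hS₀, hj₀⟩ := hj
          simp only [Finset.mem_filter] at hS₀
          have hij : (i, j) ∈ S₀ := mem_fibF.1 hj₀
          have hsup : (i, j) ∈ H.sup id := by
            rw [Finset.mem_sup]; exact ⟨S₀, hS₀.1, hij⟩
          have heq : (H.filter (fun S => i ∈ projF S)).filter (fun S => j ∈ fibF i S)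
              = H.filter (fun S => (i, j) ∈ S) := by
            rw [Finset.filter_filter]
            apply Finset.filter_congr
            intro S _
            simp only [← pair_mem, decide_eq_true_eq]
          rw [heq]
          exact hodd (i, j) hsup)
      intro S hS S' hS' hiS hiS'
      exact hcol S (Finset.mem_filter.2 ⟨hS, hiS⟩) S' (Finset.mem_filter.2 ⟨hS', hiS'⟩)
    -- the projection map is injective on H
    have hinj : ∀ S ∈ H, ∀ S' ∈ H, projF S = projF S' → S = S' := by
      intro S hS S' hS' hp
      ext ⟨i, j⟩
      rw [pair_mem, pair_mem, ← hp]
      constructor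
      · rintro ⟨hi, hj⟩
        exact ⟨hi, (hfib i S hS S' hS' hi (hp ▸ hi)) ▸ hj⟩
      · rintro ⟨hi, hj⟩
        exact ⟨hi, (hfib i S hS S' hS' hi (hp ▸ hi)).symm ▸ hj⟩
    set P := H.image projF with hP
    have hPF : P ⊆ F := by
      intro A hA
      rw [hP, Finset.mem_image] at hA
      obtain ⟨S, hS, rfl⟩ := hA
      exact (hstruct S hS).1
    apply hFfree P hPF
    refine ⟨?_, ?_, ?_⟩
    · rw [hP, Finset.card_image_of_injOn (fun S hS S' hS' h => hinj S hS S' hS' h)]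
      exact hcard
    · intro A hA
      rw [hP, Finset.mem_image] at hA
      obtain ⟨S, hS, rfl⟩ := hA
      exact (hF _ ((hstruct S hS).1)).1
    · intro i hi
      rw [Finset.mem_sup] at hi
      obtain ⟨A, hA, hiA⟩ := hi
      rw [hP, Finset.mem_image] at hA
      obtain ⟨S₀, hS₀, rfl⟩ := hA
      simp only [id] at hiA
      -- pick j in the common fiber
      obtain ⟨j, hj⟩ := hGne _ ((hstruct S₀ hS₀).2 i hiA)
      have himg : P.filter (fun A => i ∈ A) = (H.filter (fun S => i ∈ projF S)).image projF := by
        rw [hP]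
        ext A
        simp only [Finset.mem_filter, Finset.mem_image]
        constructor
        · rintro ⟨⟨S, hS, rfl⟩, hiA'⟩; exact ⟨S, ⟨hS, hiA'⟩, rfl⟩
        · rintro ⟨S, ⟨hS, hiA'⟩, rfl⟩; exact ⟨⟨S, hS, rfl⟩, hiA'⟩
      have hcardeq : (P.filter (fun A => i ∈ A)).card
          = (H.filter (fun S => i ∈ projF S)).card := by
        rw [himg]
        apply Finset.card_image_of_injOn
        intro S hS S' hS' h
        simp only [Finset.coe_filter, Set.mem_setOf_eq] at hS hS'
        exact hinj S hS.1 S' hS'.1 h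
      rw [hcardeq]
      have heq : H.filter (fun S => i ∈ projF S) = H.filter (fun S => (i, j) ∈ S) := by
        apply Finset.filter_congr
        intro S hS
        constructor
        · intro hiS
          rw [pair_mem]
          exact ⟨hiS, (hfib i S hS S₀ hS₀ hiS hiA) ▸ hj⟩
        · intro h
          exact (pair_mem.1 h).1
      rw [heq]
      apply hodd
      rw [Finset.mem_sup]
      exact ⟨S₀, hS₀, pair_mem.2 ⟨hiA, hj⟩⟩
  · intro hFac S hS T hT hST
    obtain ⟨hSF, hSfib⟩ := wreath_struct hGne hS
    obtain ⟨hTF, hTfib⟩ := wreath_struct hGne hT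
    have hproj : projF S = projF T := by
      apply hFac _ hSF _ hTF
      intro i hi
      obtain ⟨j, hj⟩ := mem_projF.1 hi
      exact mem_projF.2 ⟨j, hST hj⟩
    have hfibeq : ∀ i ∈ projF S, fibF i S = fibF i T := by
      intro i hi
      apply hGac _ (hSfib i hi) _ (hTfib i (hproj ▸ hi))
      intro j hj
      exact mem_fibF.2 (hST (mem_fibF.1 hj))
    ext ⟨i, j⟩
    rw [pair_mem, pair_mem, ← hproj]
    constructor
    · rintro ⟨hi, hj⟩
      exact ⟨hi, (hfibeq i hi) ▸ hj⟩
    · rintro ⟨hi, hj⟩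
      exact ⟨hi, (hfibeq i hi).symm ▸ hj⟩
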